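/- Let D : A → A be a linear map. Then D is a derivation of A, i.e. D(x·y) = D(x)·y + x·D(y) for all x, y ∈ A, if and only if D(e_k) = k • (e_{k−1} · D(e_1)) for all 2 ≤ k ≤ n. Equivalently, writing D(e_1) = Σ_{i=1}^{n} α_i e_i, every derivation D of A satisfies D(e_k) = k · Σ_{i=1}^{n−k+1} α_i e_{k−1+i} for all 1 ≤ k ≤ n. -/

import Mathlib

open Finset

/-- Coordinate space of the `n`-dimensional complex null-filiform associative algebra,
with respect to the basis `e_1, …, e_n` (coordinate `m : Fin n` corresponds to `e_{m+1}`). -/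
abbrev NF (n : ℕ) : Type := Fin n → ℂ

/-- Multiplication of the null-filiform algebra: `e_i · e_j = e_{i+j}` if `i + j ≤ n`
and `e_i · e_j = 0` if `i + j > n`, extended bilinearly. -/
noncomputable def nfMul {n : ℕ} (x y : NF n) : NF n :=
  fun m => ∑ i : Fin n, ∑ j : Fin n,
    if (i : ℕ) + (j : ℕ) + 1 = (m : ℕ) then x i * y j else 0

/-- The basis element `e_k`, for `1 ≤ k ≤ n` (it is `0` if `k = 0` or `k > n`). -/
noncomputable def nfE (n k : ℕ) : NF n := fun m => if (m : ℕ) + 1 = k then 1 else 0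

/-- The `k`-th power (for `k ≥ 1`) of an element of the null-filiform algebra. -/
noncomputable def nfPow {n : ℕ} (x : NF n) : ℕ → NF n
  | 0 => 0
  | 1 => x
  | k + 2 => nfMul (nfPow x (k + 1)) x

section Aux
variable {n : ℕ}

lemma nfMul_comm (x y : NF n) : nfMul x y = nfMul y x := by
  funext m
  unfold nfMul
  rw [Finset.sum_comm]
  refine Finset.sum_congr rfl fun i _ => Finset.sum_congr rfl fun j _ => ?_
  exact if_congr (by omega) (mul_comm _ _) rfl

lemma nfMul_zero_left (y : NF n) : nfMul 0 y = 0 := by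
  funext m; simp [nfMul]

lemma nfMul_add_left (x x' y : NF n) : nfMul (x + x') y = nfMul x y + nfMul x' y := by
  funext m
  simp only [nfMul, Pi.add_apply, ← Finset.sum_add_distrib]
  refine Finset.sum_congr rfl fun i _ => Finset.sum_congr rfl fun j _ => ?_
  split <;> ring

lemma nfMul_smul_left (c : ℂ) (x y : NF n) : nfMul (c • x) y = c • nfMul x y := by
  funext m
  simp only [nfMul, Pi.smul_apply, smul_eq_mul, Finset.mul_sum]
  refine Finset.sum_congr rfl fun i _ => Finset.sum_congr rfl fun j _ => ?_
  split <;> ring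

lemma nfMul_smul_right (c : ℂ) (x y : NF n) : nfMul x (c • y) = c • nfMul x y := by
  rw [nfMul_comm, nfMul_smul_left, nfMul_comm]

lemma nfMul_sum_left {ι} (s : Finset ι) (f : ι → NF n) (y : NF n) :
    nfMul (∑ i ∈ s, f i) y = ∑ i ∈ s, nfMul (f i) y := by
  classical
  induction s using Finset.induction_on with
  | empty => simp [nfMul_zero_left]
  | insert _ _ h ih => rw [Finset.sum_insert h, Finset.sum_insert h, nfMul_add_left, ih]

lemma nfMul_sum_right {ι} (s : Finset ι) (f : ι → NF n) (x : NF n) :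
    nfMul x (∑ i ∈ s, f i) = ∑ i ∈ s, nfMul x (f i) := by
  rw [nfMul_comm, nfMul_sum_left]
  exact Finset.sum_congr rfl fun i _ => nfMul_comm _ _

lemma shift_apply (a : ℕ) (ha : 1 ≤ a) (y : NF n) (m : Fin n) :
    nfMul (nfE n a) y m = if h : a ≤ (m : ℕ) then y ⟨(m : ℕ) - a, by omega⟩ else 0 := by
  unfold nfMul nfE
  have hterm : ∀ (i j : Fin n),
      (if (i : ℕ) + (j : ℕ) + 1 = (m : ℕ) then
        (if (i : ℕ) + 1 = a then (1 : ℂ) else 0) * y j else 0)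
      = if ((i : ℕ) + 1 = a ∧ (j : ℕ) + a = (m : ℕ)) then y j else 0 := by
    intro i j
    by_cases h1 : (i : ℕ) + 1 = a
    · by_cases h2 : (j : ℕ) + a = (m : ℕ)
      · have hm : (i : ℕ) + (j : ℕ) + 1 = (m : ℕ) := by omega
        rw [if_pos hm, if_pos h1, one_mul, if_pos (And.intro h1 h2)]
      · have hm : ¬((i : ℕ) + (j : ℕ) + 1 = (m : ℕ)) := by omega
        rw [if_neg hm, if_neg (fun hc : _ ∧ _ => h2 hc.2)]
    · rw [if_neg (fun hc : _ ∧ _ => h1 hc.1)]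
      by_cases hm : (i : ℕ) + (j : ℕ) + 1 = (m : ℕ)
      · rw [if_pos hm, if_neg h1, zero_mul]
      · rw [if_neg hm]
  simp only [hterm]
  split_ifs with h
  · rw [Finset.sum_eq_single (⟨a - 1, by omega⟩ : Fin n)]
    · rw [Finset.sum_eq_single (⟨(m : ℕ) - a, by omega⟩ : Fin n)]
      · rw [if_pos (by constructor <;> simp <;> omega)]
      · intro b _ hb
        rw [if_neg]
        rintro ⟨-, h2⟩
        exact hb (Fin.ext (by simpa using by omega))
      · intro hmem; exact absurd (Finset.mem_univ _) hmem
    · intro i _ hi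
      apply Finset.sum_eq_zero
      intro j _
      rw [if_neg]
      rintro ⟨h1, -⟩
      exact hi (Fin.ext (by simp; omega))
    · intro hmem; exact absurd (Finset.mem_univ _) hmem
  · apply Finset.sum_eq_zero
    intro i _
    apply Finset.sum_eq_zero
    intro j _
    rw [if_neg]
    rintro ⟨-, h2⟩
    omega

lemma nfE_of_gt {k : ℕ} (h : n < k) : nfE n k = 0 := by
  funext m
  have := m.isLt
  simp only [nfE, Pi.zero_apply]
  rw [if_neg (by omega)]

lemma nfE_mul_nfE (a b : ℕ) (ha : 1 ≤ a) (hb : 1 ≤ b) :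
    nfMul (nfE n a) (nfE n b) = nfE n (a + b) := by
  funext m
  rw [shift_apply a ha]
  by_cases h : a ≤ (m : ℕ)
  · rw [dif_pos h]
    show (if ((m : ℕ) - a) + 1 = b then (1 : ℂ) else 0) = _
    unfold nfE
    split_ifs with h1 h2 <;> first | rfl | omega
  · rw [dif_neg h]
    unfold nfE
    rw [if_neg (by omega)]

lemma shift_shift (a b : ℕ) (ha : 1 ≤ a) (hb : 1 ≤ b) (y : NF n) :
    nfMul (nfE n a) (nfMul (nfE n b) y) = nfMul (nfE n (a + b)) y := by
  funext m
  rw [shift_apply a ha, shift_apply (a + b) (by omega)]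
  split_ifs with h1 h2
  · rw [shift_apply b hb, dif_pos (by simp; omega)]
    congr 1
    exact Fin.ext (by simp; omega)
  · rw [shift_apply b hb, dif_neg (by simp; omega)]
  · omega
  · rfl

lemma shift_zero (a : ℕ) (ha : 1 ≤ a) (hna : n ≤ a) (y : NF n) :
    nfMul (nfE n a) y = 0 := by
  funext m
  have := m.isLt
  rw [shift_apply a ha, dif_neg (by omega)]
  rfl

lemma nf_expand (x : NF n) : x = ∑ m : Fin n, x m • nfE n ((m : ℕ) + 1) := by
  funext m'
  simp only [Finset.sum_apply, Pi.smul_apply, nfE, smul_eq_mul]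
  rw [Finset.sum_eq_single m']
  · rw [if_pos rfl, mul_one]
  · intro b _ hb
    rw [if_neg (fun hc => hb (Fin.ext (by omega))), mul_zero]
  · intro hmem; exact absurd (Finset.mem_univ _) hmem

lemma shift_expand (a : ℕ) (ha : 1 ≤ a) (y : NF n) :
    nfMul (nfE n a) y = ∑ i : Fin n, y i • nfE n (a + 1 + (i : ℕ)) := by
  funext m
  rw [shift_apply a ha]
  simp only [Finset.sum_apply, Pi.smul_apply, nfE, smul_eq_mul]
  split_ifs with h
  · rw [Finset.sum_eq_single (⟨(m : ℕ) - a, by omega⟩ : Fin n)]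
    · rw [if_pos (by simp; omega), mul_one]
    · intro b _ hb
      rw [if_neg (fun hc => hb (Fin.ext (by simp; omega))), mul_zero]
    · intro hmem; exact absurd (Finset.mem_univ _) hmem
  · symm
    apply Finset.sum_eq_zero
    intro b _
    rw [if_neg (by omega), mul_zero]

variable (D : NF n →ₗ[ℂ] NF n)

lemma C_of_der (hder : ∀ x y : NF n, D (nfMul x y) = nfMul (D x) y + nfMul x (D y)) :
    ∀ k, 2 ≤ k → D (nfE n k) = (k : ℂ) • nfMul (nfE n (k - 1)) (D (nfE n 1)) := by
  intro k hk
  induction k, hk using Nat.le_induction with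
  | base =>
    rw [show nfE n 2 = nfMul (nfE n 1) (nfE n 1) from (nfE_mul_nfE 1 1 le_rfl le_rfl).symm,
      hder, nfMul_comm (D (nfE n 1)) (nfE n 1)]
    norm_num [two_smul]
  | succ k hk ih =>
    have h1 : nfE n (k + 1) = nfMul (nfE n k) (nfE n 1) :=
      (nfE_mul_nfE k 1 (by omega) le_rfl).symm
    rw [h1, hder, ih, nfMul_smul_left, nfMul_comm _ (nfE n 1),
      shift_shift 1 (k - 1) le_rfl (by omega), show 1 + (k - 1) = k by omega,
      show k + 1 - 1 = k from rfl]
    push_cast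
    rw [add_smul, one_smul]

lemma key_lemma (hC : ∀ k, 2 ≤ k → D (nfE n k) = (k : ℂ) • nfMul (nfE n (k - 1)) (D (nfE n 1)))
    (A B : ℕ) (hA : 1 ≤ A) (hB : 1 ≤ B) :
    nfMul (D (nfE n A)) (nfE n B) = (A : ℂ) • nfMul (nfE n (A + B - 1)) (D (nfE n 1)) := by
  rcases eq_or_lt_of_le hA with h1 | h2
  · rw [← h1, nfMul_comm, show 1 + B - 1 = B by omega]
    norm_num
  · rw [hC A h2, nfMul_smul_left, nfMul_comm _ (nfE n B),
      shift_shift B (A - 1) hB (by omega), show B + (A - 1) = A + B - 1 by omega]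

lemma basis_der (hC : ∀ k, 2 ≤ k → D (nfE n k) = (k : ℂ) • nfMul (nfE n (k - 1)) (D (nfE n 1)))
    (A B : ℕ) (hA : 1 ≤ A) (hB : 1 ≤ B) :
    D (nfMul (nfE n A) (nfE n B)) =
      nfMul (D (nfE n A)) (nfE n B) + nfMul (nfE n A) (D (nfE n B)) := by
  rw [nfE_mul_nfE A B hA hB, hC (A + B) (by omega), key_lemma D hC A B hA hB,
    nfMul_comm (nfE n A), key_lemma D hC B A hB hA, show B + A - 1 = A + B - 1 by omega,
    show A + B - 1 = A + B - 1 from rfl]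
  push_cast
  rw [add_smul]

lemma der_of_basis
    (hC : ∀ k, 2 ≤ k → D (nfE n k) = (k : ℂ) • nfMul (nfE n (k - 1)) (D (nfE n 1))) :
    ∀ x y : NF n, D (nfMul x y) = nfMul (D x) y + nfMul x (D y) := by
  intro x y
  have hx := nf_expand x
  have hy := nf_expand y
  rw [hx, hy]
  simp only [nfMul_sum_left, nfMul_smul_left, nfMul_sum_right, nfMul_smul_right,
    map_sum, map_smul, Finset.smul_sum]
  rw [← Finset.sum_add_distrib]
  refine Finset.sum_congr rfl fun a _ => ?_
  rw [← Finset.sum_add_distrib]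
  refine Finset.sum_congr rfl fun b _ => ?_
  rw [← smul_add, ← smul_add, basis_der D hC ((b : ℕ) + 1) ((a : ℕ) + 1) (by omega) (by omega)]

end Aux

/-- A linear map `D` on the null-filiform algebra is a derivation iff
`D(e_k) = k • (e_{k-1} · D(e_1))` for all `2 ≤ k ≤ n`; equivalently, every derivation
satisfies `D(e_k) = k · ∑ α_i e_{k-1+i}` where `D(e_1) = ∑ α_i e_i`. -/
theorem derivations_on_null_filiform (n : ℕ) (hn : 1 ≤ n) (D : NF n →ₗ[ℂ] NF n) :
    ((∀ x y : NF n, D (nfMul x y) = nfMul (D x) y + nfMul x (D y)) ↔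
      (∀ k, 2 ≤ k → k ≤ n →
        D (nfE n k) = (k : ℂ) • nfMul (nfE n (k - 1)) (D (nfE n 1)))) ∧
    ((∀ x y : NF n, D (nfMul x y) = nfMul (D x) y + nfMul x (D y)) →
      ∀ k, 1 ≤ k → k ≤ n →
        D (nfE n k) = (k : ℂ) • ∑ i : Fin n, D (nfE n 1) i • nfE n (k + (i : ℕ))) := by
  constructor
  · constructor
    · intro hder k hk _
      exact C_of_der D hder k hk
    · intro H
      apply der_of_basis D
      intro k hk
      by_cases hkn : k ≤ n
      · exact H k hk hkn
      · rw [nfE_of_gt (by omega), map_zero, shift_zero (k - 1) (by omega) (by omega), smul_zero]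
  · intro hder k hk1 hk2
    rcases eq_or_lt_of_le hk1 with h1 | h2
    · rw [← h1]
      norm_num
      conv_lhs => rw [nf_expand (D (nfE n 1))]
      exact Finset.sum_congr rfl fun i _ => by rw [add_comm 1 (i : ℕ)]
    · rw [C_of_der D hder k h2, shift_expand (k - 1) (by omega), show k - 1 + 1 = k by omega]
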